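/- There is a constant C₁>0 such that for all z,w,w₀∈𝔹 with d(z,w₀) > C₁·d(w,w₀), one has |⟨z,w₀⟩−⟨z,w⟩| ≤ (1/2)·|1−⟨z,w₀⟩|, and consequently |1−⟨z,w⟩| ≥ (1/2)·|1−⟨z,w₀⟩|. -/

import Mathlib

open MeasureTheory Complex
open scoped ENNReal NNReal

noncomputable section

/-- `ℂ^N` with the Euclidean norm. -/
abbrev EN (N : ℕ) := EuclideanSpace ℂ (Fin N)

instance (N : ℕ) : MeasurableSpace (EN N) := MeasurableSpace.comap WithLp.ofLp MeasurableSpace.pi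
instance (N : ℕ) : BorelSpace (EN N) := PiLp.borelSpace (p := 2) (X := fun _ : Fin N => ℂ)

/-- Lebesgue measure on `ℂ^N`. -/
def volEN (N : ℕ) : Measure (EN N) :=
  Measure.map (WithLp.toLp 2) (Measure.pi fun _ : Fin N => (volume : Measure ℂ))

/-- The Hermitian pairing `⟨z,w⟩ = ∑ z_j conj (w_j)`. -/
def bInner {N : ℕ} (z w : EN N) : ℂ := ∑ j, z j * (starRingEnd ℂ) (w j)

/-- The open unit ball `𝔹` of `ℂ^N`. -/
def ball01 (N : ℕ) : Set (EN N) := Metric.ball 0 1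

/-- Lebesgue measure on the unit ball, normalized so that `μ(𝔹) = 1`. -/
def muB (N : ℕ) : Measure (EN N) :=
  (volEN N (Metric.ball (0 : EN N) 1))⁻¹ • (volEN N).restrict (Metric.ball (0 : EN N) 1)

/-- The weighted measure `dμ_q = (1-|z|²)^q dμ`. -/
def muW (N : ℕ) (q : ℝ) : Measure (EN N) :=
  (muB N).withDensity fun z => ENNReal.ofReal ((1 - ‖z‖ ^ 2) ^ q)

/-- The Bergman–Besov kernel `K_a`. -/
def kernelK (N : ℕ) (a : ℝ) (z w : EN N) : ℂ :=
  if -((N : ℝ) + 1) < a then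
    (1 - bInner z w) ^ (-((N : ℂ) + 1 + (a : ℂ)))
  else
    ∑' k : ℕ, ((Nat.factorial k : ℂ)
        / ((Real.Gamma ((1 - (N : ℝ) - a) + k) / Real.Gamma (1 - (N : ℝ) - a) : ℝ) : ℂ))
      * bInner z w ^ k

/-- The operator `T_{a,b}`. -/
def Tab (N : ℕ) (a b : ℝ) (f : EN N → ℂ) (z : EN N) : ℂ :=
  ∫ w, kernelK N a z w * f w * (((1 - ‖w‖ ^ 2) ^ b : ℝ) : ℂ) ∂(muB N)

/-- The operator `P_{s,t}`. -/
def Pop (N : ℕ) (s t : ℝ) (f : EN N → ℂ) (z : EN N) : ℂ :=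
  (((1 - ‖z‖ ^ 2) ^ t : ℝ) : ℂ) * Tab N (s + t) s f z

/-- The positive operator `S_{a,b}`. -/
def Sop (N : ℕ) (a b : ℝ) (f : EN N → ℂ) (z : EN N) : ℝ≥0∞ :=
  ∫⁻ w, ENNReal.ofReal (‖kernelK N a z w‖ * ‖f w‖ * (1 - ‖w‖ ^ 2) ^ b) ∂(muB N)

/-- Absolute convergence of the integral defining `T_{a,b} f (z)`. -/
def TIntegrable (N : ℕ) (a b : ℝ) (f : EN N → ℂ) (z : EN N) : Prop :=
  Integrable (fun w => kernelK N a z w * f w * (((1 - ‖w‖ ^ 2) ^ b : ℝ) : ℂ)) (muB N)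

/-- `∫_𝔹 |f|^p ω dμ_q`. -/
def wLp (N : ℕ) (p q : ℝ) (ω : EN N → ℝ) (f : EN N → ℂ) : ℝ≥0∞ :=
  ∫⁻ z, ENNReal.ofReal (‖f z‖ ^ p * ω z) ∂(muW N q)

/-- A weight: positive on `𝔹` and locally integrable there. -/
def IsWeight (N : ℕ) (ω : EN N → ℝ) : Prop :=
  Measurable ω ∧ (∀ z ∈ ball01 N, 0 < ω z) ∧ LocallyIntegrableOn ω (ball01 N) (volEN N)

/-- `T_{a,b}` is well defined and continuous from `L^p(ω dμ_q)` to `L^p(ω dμ_Q)`. -/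
def TBounded (N : ℕ) (p a b q Q : ℝ) (ω : EN N → ℝ) : Prop :=
  (∀ f : EN N → ℂ, Measurable f → wLp N p q ω f < ⊤ → ∀ z ∈ ball01 N, TIntegrable N a b f z) ∧
  ∃ C : ℝ, ∀ f : EN N → ℂ, Measurable f → wLp N p q ω f < ⊤ →
    wLp N p Q ω (Tab N a b f) ≤ ENNReal.ofReal C * wLp N p q ω f

/-- `P_{s,t}` is well defined and continuous from `L^p(ω dμ_q)` to `L^p(ω dμ_Q)`. -/
def PBounded (N : ℕ) (p s t q Q : ℝ) (ω : EN N → ℝ) : Prop :=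
  (∀ f : EN N → ℂ, Measurable f → wLp N p q ω f < ⊤ → ∀ z ∈ ball01 N,
      TIntegrable N (s + t) s f z) ∧
  ∃ C : ℝ, ∀ f : EN N → ℂ, Measurable f → wLp N p q ω f < ⊤ →
    wLp N p Q ω (Pop N s t f) ≤ ENNReal.ofReal C * wLp N p q ω f

/-- `S_{a,b}` is well defined and continuous from `L^p(ω dμ_q)` to `L^p(ω dμ_Q)`. -/
def SBounded (N : ℕ) (p a b q Q : ℝ) (ω : EN N → ℝ) : Prop :=
  (∀ f : EN N → ℂ, Measurable f → wLp N p q ω f < ⊤ → ∀ z ∈ ball01 N, Sop N a b f z < ⊤) ∧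
  ∃ C : ℝ, ∀ f : EN N → ℂ, Measurable f → wLp N p q ω f < ⊤ →
    ∫⁻ z, Sop N a b f z ^ p * ENNReal.ofReal (ω z) ∂(muW N Q) ≤
      ENNReal.ofReal C * wLp N p q ω f

/-- The pseudo-distance `d(z,w) = ||z|-|w|| + |1 - ⟨z,w⟩/(|z||w|)|`. -/
def pd {N : ℕ} (z w : EN N) : ℝ :=
  |‖z‖ - ‖w‖| + ‖1 - bInner z w / ((‖z‖ : ℂ) * (‖w‖ : ℂ))‖

/-- The pseudoball `B(ζ,R)`. -/
def pball (N : ℕ) (ζ : EN N) (R : ℝ) : Set (EN N) := {z ∈ ball01 N | pd z ζ < R}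

/-- The maximal function `m'_{a,b}`. -/
def mMax' (N : ℕ) (a b : ℝ) (f : EN N → ℂ) (z : EN N) : ℝ≥0∞ :=
  ⨆ (ζ : EN N) (_ : ‖ζ‖ < 1) (R : ℝ) (_ : 1 - ‖ζ‖ < R) (_ : z ∈ pball N ζ R),
    ENNReal.ofReal (R ^ (-((N : ℝ) + 1 + a))) *
      ∫⁻ w in pball N ζ R, ENNReal.ofReal (‖f w‖ * (1 - ‖w‖ ^ 2) ^ b) ∂(muB N)

/-- The maximal function `m_{a,b}`. -/
def mMax (N : ℕ) (a b : ℝ) (f : EN N → ℂ) (z : EN N) : ℝ≥0∞ :=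
  ⨆ (ζ : EN N) (_ : ‖ζ‖ < 1) (R : ℝ) (_ : 1 - ‖ζ‖ < R) (_ : z ∈ pball N ζ R),
    (muW N a (pball N ζ R))⁻¹ *
      ∫⁻ w in pball N ζ R, ENNReal.ofReal (‖f w‖ * (1 - ‖w‖ ^ 2) ^ b) ∂(muB N)

/-- Normalizing factor in the Békollé–Bonami type class `D_p^{s,t,q,Q}`. -/
def Dnorm (N : ℕ) (p s t q Q : ℝ) (ζ : EN N) (R : ℝ) : ℝ≥0∞ :=
  if -1 < s + t then (muW N (s + t + (Q - q) / p) (pball N ζ R))⁻¹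
  else ENNReal.ofReal (R ^ (-((N : ℝ) + 1 + s + t + (Q - q) / p)))

/-- The `D_p^{s,t,q,Q}` characteristic of the weight `ω`. -/
def Dconst (N : ℕ) (p s t q Q : ℝ) (ω : EN N → ℝ) : ℝ≥0∞ :=
  ⨆ (ζ : EN N) (_ : ‖ζ‖ < 1) (R : ℝ) (_ : 1 - ‖ζ‖ < R),
    (Dnorm N p s t q Q ζ R *
        ∫⁻ z in pball N ζ R, ENNReal.ofReal (ω z) ∂(muW N (Q + p * t))) *
    (Dnorm N p s t q Q ζ R *
        ∫⁻ z in pball N ζ R, ENNReal.ofReal (ω z ^ (-(1 / (p - 1))))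
          ∂(muW N (q + (p / (p - 1)) * (s - q)))) ^ (p - 1)


section Stmt17Aux

variable {N : ℕ}

private lemma bInner_eq (z w : EN N) : bInner z w = @inner ℂ _ _ w z := by
  simp [bInner, PiLp.inner_apply, RCLike.inner_apply, mul_comm]

private lemma abs_bInner_le (z w : EN N) : ‖bInner z w‖ ≤ ‖z‖ * ‖w‖ := by
  rw [bInner_eq]
  calc ‖(@inner ℂ _ _ w z : ℂ)‖ ≤ ‖w‖ * ‖z‖ := norm_inner_le_norm w z
    _ = ‖z‖ * ‖w‖ := mul_comm _ _

private lemma abs_sub_le'' (x y : ℂ) :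
    ‖x - y‖ ≤ ‖x‖ + ‖y‖ := by
  simpa [sub_eq_add_neg] using norm_add_le x (-y)

private lemma abs_u_le_one (z w : EN N) :
    ‖bInner z w / ((‖z‖ : ℂ) * (‖w‖ : ℂ))‖ ≤ 1 := by
  rw [norm_div]
  apply div_le_one_of_le₀
  · calc ‖bInner z w‖ ≤ ‖z‖ * ‖w‖ := abs_bInner_le z w
      _ = ‖(‖z‖ : ℂ) * (‖w‖ : ℂ)‖ := by
        rw [norm_mul, Complex.norm_real, Real.norm_eq_abs, Complex.norm_real, Real.norm_eq_abs,
          _root_.abs_of_nonneg (norm_nonneg _), _root_.abs_of_nonneg (norm_nonneg _)]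
  · exact norm_nonneg _

private lemma pd_nonneg' (z w : EN N) : 0 ≤ pd z w :=
  add_nonneg (abs_nonneg _) (norm_nonneg _)

private lemma pd_le_three (z w : EN N) (hz : ‖z‖ ≤ 1) (hw : ‖w‖ ≤ 1) : pd z w ≤ 3 := by
  have h1 : |‖z‖ - ‖w‖| ≤ 1 := by
    rw [abs_le]; constructor <;> nlinarith [norm_nonneg z, norm_nonneg w]
  have h2 : ‖1 - bInner z w / ((‖z‖ : ℂ) * (‖w‖ : ℂ))‖ ≤ 2 := by
    have := abs_sub_le'' 1 (bInner z w / ((‖z‖ : ℂ) * (‖w‖ : ℂ)))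
    have h3 := abs_u_le_one z w
    simp only [norm_one] at this
    linarith
  unfold pd
  linarith

private lemma pd_le_six (z w : EN N) (hz : ‖z‖ < 1) (hw : ‖w‖ < 1) :
    pd z w ≤ 6 * ‖1 - bInner z w‖ := by
  have ha : 0 ≤ ‖z‖ := norm_nonneg z
  have hb : 0 ≤ ‖w‖ := norm_nonneg w
  have hK1 : 1 - ‖z‖ * ‖w‖ ≤ ‖1 - bInner z w‖ := by
    have h1 := abs_bInner_le z w
    have h2 := norm_sub_norm_le 1 (bInner z w)
    simp only [norm_one] at h2
    linarith
  have hK0 : 0 ≤ ‖1 - bInner z w‖ := norm_nonneg _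
  by_cases hab : ‖z‖ * ‖w‖ ≤ 1 / 2
  · have := pd_le_three z w hz.le hw.le
    linarith
  · push_neg at hab
    have hzne : ‖z‖ ≠ 0 := by intro h; rw [h] at hab; simp at hab; linarith
    have hwne : ‖w‖ ≠ 0 := by intro h; rw [h] at hab; simp at hab; linarith
    have habne : ((‖z‖ : ℂ) * (‖w‖ : ℂ)) ≠ 0 := by
      simp only [ne_eq, mul_eq_zero, Complex.ofReal_eq_zero]
      tauto
    set u := bInner z w / ((‖z‖ : ℂ) * (‖w‖ : ℂ)) with hu
    have hc : bInner z w = ((‖z‖ : ℂ) * (‖w‖ : ℂ)) * u := by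
      rw [hu, mul_div_cancel₀ _ habne]
    have key : ((‖z‖ : ℂ) * (‖w‖ : ℂ)) * (1 - u) = (1 - bInner z w) - (1 - (‖z‖ : ℂ) * (‖w‖ : ℂ)) := by
      rw [hc]; ring
    have h4 : ‖((‖z‖ : ℂ) * (‖w‖ : ℂ)) * (1 - u)‖ ≤
        ‖1 - bInner z w‖ + ‖1 - (‖z‖ : ℂ) * (‖w‖ : ℂ)‖ := by
      rw [key]; exact abs_sub_le'' _ _
    have h5 : ‖((‖z‖ : ℂ) * (‖w‖ : ℂ)) * (1 - u)‖ =
        (‖z‖ * ‖w‖) * ‖1 - u‖ := by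
      rw [norm_mul, norm_mul, Complex.norm_real, Real.norm_eq_abs, Complex.norm_real, Real.norm_eq_abs,
        _root_.abs_of_nonneg ha, _root_.abs_of_nonneg hb]
    have h6 : ‖1 - (‖z‖ : ℂ) * (‖w‖ : ℂ)‖ = 1 - ‖z‖ * ‖w‖ := by
      have : (1 - (‖z‖ : ℂ) * (‖w‖ : ℂ)) = ((1 - ‖z‖ * ‖w‖ : ℝ) : ℂ) := by push_cast; ring
      rw [this, Complex.norm_real, Real.norm_eq_abs, _root_.abs_of_nonneg (by nlinarith)]
    have h7 : (‖z‖ * ‖w‖) * ‖1 - u‖ ≤ 2 * ‖1 - bInner z w‖ := by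
      rw [← h5]; rw [h6] at h4; linarith
    have h8 : ‖1 - u‖ ≤ 4 * ‖1 - bInner z w‖ := by
      nlinarith [norm_nonneg (1 - u)]
    have h9 : |‖z‖ - ‖w‖| ≤ 1 - ‖z‖ * ‖w‖ := by
      rw [abs_le]; constructor <;> nlinarith
    unfold pd
    rw [← hu]
    linarith

private lemma bInner_zero_left (w : EN N) : bInner (0 : EN N) w = 0 := by
  simp [bInner]

private lemma bInner_zero_right (z : EN N) : bInner z (0 : EN N) = 0 := by
  simp [bInner]

private lemma one_le_pd_zero_right (w : EN N) : 1 ≤ pd w (0 : EN N) := by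
  unfold pd
  rw [bInner_zero_right]
  simp [norm_nonneg]

private lemma norm_sub_sq_le (w w₀ : EN N) (hw : ‖w‖ ≤ 1) (hw₀ : ‖w₀‖ ≤ 1) :
    ‖w - w₀‖ ^ 2 ≤ 2 * pd w w₀ := by
  have hc : 0 ≤ ‖w‖ := norm_nonneg w
  have hb : 0 ≤ ‖w₀‖ := norm_nonneg w₀
  have hns : ‖w - w₀‖ ^ 2 = ‖w‖ ^ 2 - 2 * (bInner w w₀).re + ‖w₀‖ ^ 2 := by
    rw [@norm_sub_sq ℂ]
    congr 2
    rw [bInner_eq]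
    rw [← inner_conj_symm]
    simp
    rw [← inner_conj_symm w₀ w, Complex.conj_re]
  have h1 : (‖w‖ - ‖w₀‖) ^ 2 ≤ |‖w‖ - ‖w₀‖| := by
    have habs1 : |‖w‖ - ‖w₀‖| ≤ 1 := by
      rw [abs_le]; constructor <;> nlinarith
    nlinarith [_root_.sq_abs (‖w‖ - ‖w₀‖), abs_nonneg (‖w‖ - ‖w₀‖)]
  have h2 : ‖w‖ * ‖w₀‖ - (bInner w w₀).re ≤
      ‖1 - bInner w w₀ / ((‖w‖ : ℂ) * (‖w₀‖ : ℂ))‖ := by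
    by_cases hcb : ‖w‖ * ‖w₀‖ = 0
    · have hP : bInner w w₀ = 0 := by
        rcases mul_eq_zero.mp hcb with h | h
        · rw [norm_eq_zero.mp h, bInner_zero_left]
        · rw [norm_eq_zero.mp h, bInner_zero_right]
      rw [hP]
      simp [hcb]
    · have hcb' : 0 < ‖w‖ * ‖w₀‖ := lt_of_le_of_ne (by positivity) (Ne.symm hcb)
      have hcast : bInner w w₀ / ((‖w‖ : ℂ) * (‖w₀‖ : ℂ)) =
          bInner w w₀ / ((‖w‖ * ‖w₀‖ : ℝ) : ℂ) := by push_cast; ring_nf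
      have hre : (1 - bInner w w₀ / ((‖w‖ : ℂ) * (‖w₀‖ : ℂ))).re =
          1 - (bInner w w₀).re / (‖w‖ * ‖w₀‖) := by
        rw [hcast, Complex.sub_re, Complex.one_re, Complex.div_ofReal_re]
      have hle := Complex.re_le_norm (1 - bInner w w₀ / ((‖w‖ : ℂ) * (‖w₀‖ : ℂ)))
      rw [hre] at hle
      have habs0 : 0 ≤ ‖1 - bInner w w₀ / ((‖w‖ : ℂ) * (‖w₀‖ : ℂ))‖ :=
        norm_nonneg _
      have hcb1 : ‖w‖ * ‖w₀‖ ≤ 1 := by nlinarith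
      have := mul_le_mul_of_nonneg_left hle hcb'.le
      rw [mul_sub, mul_div_cancel₀ _ hcb] at this
      nlinarith
  unfold pd
  nlinarith

end Stmt17Aux

set_option maxHeartbeats 1000000 in
/-- There is `C₁ > 0` such that whenever `d(z,w₀) > C₁ d(w,w₀)` one has
`|⟨z,w₀⟩ - ⟨z,w⟩| ≤ |1-⟨z,w₀⟩|/2`, and consequently `|1-⟨z,w⟩| ≥ |1-⟨z,w₀⟩|/2`. -/
theorem stmt17 (N : ℕ) (hN : 1 ≤ N) :
    ∃ C₁ : ℝ, 0 < C₁ ∧ ∀ z w w₀ : EN N, ‖z‖ < 1 → ‖w‖ < 1 → ‖w₀‖ < 1 →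
      C₁ * pd w w₀ < pd z w₀ →
      ‖bInner z w₀ - bInner z w‖ ≤ 1 / 2 * ‖1 - bInner z w₀‖ ∧
      1 / 2 * ‖1 - bInner z w₀‖ ≤ ‖1 - bInner z w‖ := by
  refine ⟨1000, by norm_num, ?_⟩
  intro z w w₀ hz hw hw₀ hlt
  set K := ‖1 - bInner z w₀‖ with hKdef
  have hK0 : 0 < K := by
    have h1 := abs_bInner_le z w₀
    have h2 := norm_sub_norm_le 1 (bInner z w₀)
    simp only [norm_one] at h2
    nlinarith [norm_nonneg z, norm_nonneg w₀]
  have hd0 : 0 ≤ pd w w₀ := pd_nonneg' w w₀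
  have hD6 : pd z w₀ ≤ 6 * K := pd_le_six z w₀ hz hw₀
  have hdK : 1000 * pd w w₀ < 6 * K := lt_of_lt_of_le hlt hD6
  have hKle : K ≤ 2 := by
    have h1 := abs_bInner_le z w₀
    have h2 := abs_sub_le'' 1 (bInner z w₀)
    simp only [norm_one] at h2
    nlinarith [norm_nonneg z, norm_nonneg w₀]
  have hw₀ne : w₀ ≠ 0 := by
    intro h; subst h
    have := one_le_pd_zero_right w
    linarith
  have hb0 : (0:ℝ) < ‖w₀‖ := norm_pos_iff.mpr hw₀ne
  set q : ℝ := ‖w₀‖⁻¹ with hq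
  have hq0 : 0 < q := inv_pos.mpr hb0
  have hqb : q * ‖w₀‖ = 1 := inv_mul_cancel₀ hb0.ne'
  have hq1 : 1 ≤ q := by nlinarith [hw₀.le]
  set e : EN N := ((q : ℂ)) • w₀ with he_def
  have he : ‖e‖ = 1 := by
    rw [he_def, norm_smul, Complex.norm_real, Real.norm_eq_abs, _root_.abs_of_nonneg hq0.le]
    exact hqb
  set β : ℂ := @inner ℂ _ _ e z with hβ_def
  have hβle : ‖β‖ ≤ 1 := by
    calc ‖β‖ ≤ ‖e‖ * ‖z‖ := norm_inner_le_norm e z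
      _ ≤ 1 := by rw [he, one_mul]; exact hz.le
  have hβval : β = (q : ℂ) * bInner z w₀ := by
    rw [hβ_def, he_def, bInner_eq, inner_smul_left, Complex.conj_ofReal]
  have hβabs : ‖bInner z w₀‖ ≤ ‖β‖ := by
    rw [hβval, norm_mul, Complex.norm_real, Real.norm_eq_abs, _root_.abs_of_nonneg hq0.le]
    nlinarith [norm_nonneg (bInner z w₀)]
  -- decomposition
  have hsplit : bInner z w₀ - bInner z w =
      @inner ℂ _ _ (w₀ - w) (β • e) + @inner ℂ _ _ (w₀ - w) (z - β • e) := by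
    rw [← inner_add_right, bInner_eq, bInner_eq, ← inner_sub_left]
    congr 1
    abel
  -- bound on the first term
  have hA : ‖@inner ℂ _ _ (w₀ - w) (β • e)‖ ≤ pd w w₀ := by
    have hval : @inner ℂ _ _ (w₀ - w) (β • e) =
        β * ((q : ℂ) * ((‖w₀‖ : ℂ) ^ 2 - @inner ℂ _ _ w w₀)) := by
      rw [inner_smul_right, he_def, inner_smul_right, inner_sub_left,
        inner_self_eq_norm_sq_to_K]
      norm_cast
    have hconj : ‖(‖w₀‖ : ℂ) ^ 2 - @inner ℂ _ _ w w₀‖ =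
        ‖(‖w₀‖ : ℂ) ^ 2 - bInner w w₀‖ := by
      rw [← Complex.norm_conj ((‖w₀‖ : ℂ) ^ 2 - @inner ℂ _ _ w w₀)]
      congr 1
      rw [map_sub, bInner_eq, inner_conj_symm]
      norm_cast
      rw [Complex.conj_ofReal]
    have hmain : q * ‖(‖w₀‖ : ℂ) ^ 2 - bInner w w₀‖ ≤ pd w w₀ := by
      have hqc : q * ‖(‖w₀‖ : ℂ) ^ 2 - bInner w w₀‖ =
          ‖(‖w₀‖ : ℂ) - (q : ℂ) * bInner w w₀‖ := by
        have habsq : ‖(q : ℂ)‖ = q := by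
          rw [Complex.norm_real, Real.norm_eq_abs, _root_.abs_of_nonneg hq0.le]
        have hcb : ((q : ℂ)) * (‖w₀‖ : ℂ) = 1 := by
          rw [← Complex.ofReal_mul, hqb, Complex.ofReal_one]
        have hqsq : ((q : ℂ)) * (‖w₀‖ : ℂ) ^ 2 = (‖w₀‖ : ℂ) := by
          rw [sq, ← mul_assoc, hcb, one_mul]
        conv_lhs => rw [← habsq]
        rw [← norm_mul]
        congr 1
        rw [mul_sub, hqsq]
      rw [hqc]
      by_cases hwz : w = 0
      · subst hwz
        rw [bInner_zero_left]
        unfold pd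
        rw [bInner_zero_left]
        simp only [mul_zero, norm_zero, zero_sub, abs_neg, zero_div, sub_zero, norm_one]
        rw [_root_.abs_of_nonneg hb0.le, Complex.norm_real, Real.norm_eq_abs, _root_.abs_of_nonneg hb0.le]
        linarith [norm_nonneg (1 - (0:ℂ))]
      · have hcn : (0:ℝ) < ‖w‖ := norm_pos_iff.mpr hwz
        set u' : ℂ := bInner w w₀ / ((‖w‖ : ℂ) * (‖w₀‖ : ℂ)) with hu'
        have hsplit2 : (‖w₀‖ : ℂ) - (q : ℂ) * bInner w w₀ =
            ((‖w₀‖ : ℂ) - (‖w‖ : ℂ)) + (‖w‖ : ℂ) * (1 - u') := by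
          rw [hu', hq]
          have h1 : ((‖w‖:ℝ):ℂ) ≠ 0 := by exact_mod_cast hcn.ne'
          have h2 : ((‖w₀‖:ℝ):ℂ) ≠ 0 := by exact_mod_cast hb0.ne'
          field_simp
          push_cast
          rw [one_div, mul_sub, ← mul_assoc, mul_inv_cancel₀ h2, one_mul]
          ring
        rw [hsplit2]
        calc ‖((‖w₀‖ : ℂ) - (‖w‖ : ℂ)) + (‖w‖ : ℂ) * (1 - u')‖
            ≤ ‖(‖w₀‖ : ℂ) - (‖w‖ : ℂ)‖ + ‖(‖w‖ : ℂ) * (1 - u')‖ :=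
              norm_add_le _ _
          _ ≤ |‖w‖ - ‖w₀‖| + ‖1 - u'‖ := by
              rw [norm_mul, Complex.norm_real, Real.norm_eq_abs, _root_.abs_of_nonneg hcn.le]
              have h3 : ‖(‖w₀‖ : ℂ) - (‖w‖ : ℂ)‖ = |‖w‖ - ‖w₀‖| := by
                rw [← Complex.ofReal_sub, Complex.norm_real, Real.norm_eq_abs, abs_sub_comm]
              rw [h3]
              nlinarith [norm_nonneg (1 - u'), hw.le]
          _ = pd w w₀ := by rw [hu']; rfl
    calc ‖@inner ℂ _ _ (w₀ - w) (β • e)‖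
        = ‖β‖ * (q * ‖(‖w₀‖ : ℂ) ^ 2 - bInner w w₀‖) := by
          rw [hval, norm_mul, norm_mul, Complex.norm_real, Real.norm_eq_abs, _root_.abs_of_nonneg hq0.le, hconj]
      _ ≤ pd w w₀ := by
          nlinarith [norm_nonneg ((‖w₀‖ : ℂ) ^ 2 - bInner w w₀),
            mul_nonneg hq0.le (norm_nonneg ((‖w₀‖ : ℂ) ^ 2 - bInner w w₀))]
  -- bound on the second term
  have hx2 : ‖w₀ - w‖ ^ 2 ≤ 2 * pd w w₀ := by
    rw [norm_sub_rev]; exact norm_sub_sq_le w w₀ hw.le hw₀.le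
  have hz2 : ‖z - β • e‖ ^ 2 ≤ 2 * K := by
    have h1 : ‖z - β • e‖ ^ 2 = ‖z‖ ^ 2 - ‖β‖ ^ 2 := by
      rw [@norm_sub_sq ℂ]
      have h2 : @inner ℂ _ _ z (β • e) = β * (starRingEnd ℂ) β := by
        rw [inner_smul_right, ← inner_conj_symm z e, ← hβ_def]
      have h3 : RCLike.re (@inner ℂ _ _ z (β • e)) = ‖β‖ ^ 2 := by
        rw [h2, Complex.mul_conj]
        simp [Complex.sq_norm, RCLike.re_to_complex]
      rw [h3, norm_smul, he]
      ring
    have h4 : 1 - ‖β‖ ≤ K := by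
      have h5 := norm_sub_norm_le 1 (bInner z w₀)
      simp only [norm_one] at h5
      linarith [hβabs]
    nlinarith [norm_nonneg β, hz.le, norm_nonneg z]
  have hB : ‖@inner ℂ _ _ (w₀ - w) (z - β • e)‖ ≤ ‖w₀ - w‖ * ‖z - β • e‖ := by
    exact norm_inner_le_norm _ _
  have hX2 : (‖w₀ - w‖ * ‖z - β • e‖) ^ 2 ≤ 4 * (pd w w₀ * K) := by
    have := mul_le_mul hx2 hz2 (sq_nonneg _) (by linarith)
    nlinarith [norm_nonneg (w₀ - w), norm_nonneg (z - β • e)]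
  have hT : ‖bInner z w₀ - bInner z w‖ ≤ pd w w₀ + ‖w₀ - w‖ * ‖z - β • e‖ := by
    rw [hsplit]
    calc ‖@inner ℂ _ _ (w₀ - w) (β • e) + @inner ℂ _ _ (w₀ - w) (z - β • e)‖
        ≤ ‖@inner ℂ _ _ (w₀ - w) (β • e)‖ +
            ‖@inner ℂ _ _ (w₀ - w) (z - β • e)‖ := norm_add_le _ _
      _ ≤ pd w w₀ + ‖w₀ - w‖ * ‖z - β • e‖ := add_le_add hA hB
  have hXnn : 0 ≤ ‖w₀ - w‖ * ‖z - β • e‖ :=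
    mul_nonneg (norm_nonneg _) (norm_nonneg _)
  have hmain : ‖bInner z w₀ - bInner z w‖ ≤ 1 / 2 * K := by
    nlinarith [sq_nonneg (‖w₀ - w‖ * ‖z - β • e‖ - K / 3)]
  refine ⟨hmain, ?_⟩
  have htri : K ≤ ‖1 - bInner z w‖ + ‖bInner z w₀ - bInner z w‖ := by
    have heq : (1 - bInner z w₀) = (1 - bInner z w) - (bInner z w₀ - bInner z w) := by ring
    rw [hKdef, heq]
    exact abs_sub_le'' _ _
  linarith
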